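/- For w ∈ [−1/3, 1], the Werner state ρ_w is separable if and only if w ≤ 1/3. -/

import Mathlib

open Matrix
open scoped Kronecker ComplexOrder

def pairToFin4 (p : Fin 2 × Fin 2) : Fin 4 := ⟨2 * p.1.val + p.2.val, by omega⟩

/-- The Werner state `ρ_w`, indexed by `Fin 2 × Fin 2` in the basis order
`(0,0), (0,1), (1,0), (1,1)`. -/
noncomputable def wernerState (w : ℝ) : Matrix (Fin 2 × Fin 2) (Fin 2 × Fin 2) ℂ :=
  fun p q =>
    !![(((1 - w) / 4 : ℝ) : ℂ), 0, 0, 0;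
       0, (((1 + w) / 4 : ℝ) : ℂ), ((-(w / 2) : ℝ) : ℂ), 0;
       0, ((-(w / 2) : ℝ) : ℂ), (((1 + w) / 4 : ℝ) : ℂ), 0;
       0, 0, 0, (((1 - w) / 4 : ℝ) : ℂ)] (pairToFin4 p) (pairToFin4 q)

def IsDensityMatrix {n : Type*} [Fintype n] [DecidableEq n] (ρ : Matrix n n ℂ) : Prop :=
  ρ.PosSemidef ∧ ρ.trace = 1

/-- A bipartite density matrix is separable if it is a finite convex combination of
Kronecker products of density matrices. -/
def IsSeparableState {m n : ℕ} (ρ : Matrix (Fin m × Fin n) (Fin m × Fin n) ℂ) : Prop :=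
  ∃ (k : ℕ) (p : Fin k → ℝ) (σ : Fin k → Matrix (Fin m) (Fin m) ℂ)
    (τ : Fin k → Matrix (Fin n) (Fin n) ℂ),
    (∀ i, 0 ≤ p i) ∧ (∑ i, p i = 1) ∧
    (∀ i, IsDensityMatrix (σ i)) ∧ (∀ i, IsDensityMatrix (τ i)) ∧
    ρ = ∑ i, (p i : ℂ) • (σ i ⊗ₖ τ i)


section WernerAux

-- trace of product of PSD matrices is nonneg
lemma aux_trace_mul_psd_nonneg {σ τ : Matrix (Fin 2) (Fin 2) ℂ}
    (hσ : σ.PosSemidef) (hτ : τ.PosSemidef) : 0 ≤ (σ * τ).trace := by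
  open scoped MatrixOrder Matrix.Norms.L2Operator in
  obtain ⟨B, rfl⟩ := CStarAlgebra.nonneg_iff_eq_star_mul_self.mp hσ.nonneg
  rw [Matrix.star_eq_conjTranspose]
  rw [Matrix.mul_assoc, Matrix.trace_mul_comm]
  have hP : (B * τ * Bᴴ).PosSemidef := hτ.mul_mul_conjTranspose_same B
  have h0 : (0:ℂ) ≤ (B * τ * Bᴴ) 0 0 := by
    have := hP.dotProduct_mulVec_nonneg ![1, 0]
    simpa [dotProduct, Matrix.mulVec, Fin.sum_univ_two] using this
  have h1 : (0:ℂ) ≤ (B * τ * Bᴴ) 1 1 := by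
    have := hP.dotProduct_mulVec_nonneg ![0, 1]
    simpa [dotProduct, Matrix.mulVec, Fin.sum_univ_two] using this
  have h : (B * τ * Bᴴ).trace = (B * τ * Bᴴ) 0 0 + (B * τ * Bᴴ) 1 1 := by
    simp [Matrix.trace, Fin.sum_univ_two]
  rw [h]
  exact add_nonneg h0 h1

lemma aux_key_ineq {σ τ : Matrix (Fin 2) (Fin 2) ℂ}
    (hσ : IsDensityMatrix σ) (hτ : IsDensityMatrix τ) :
    (σ 0 0 * τ 1 1 + σ 1 1 * τ 0 0 - σ 0 1 * τ 1 0 - σ 1 0 * τ 0 1).re ≤ 1 := by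
  have hid : σ 0 0 * τ 1 1 + σ 1 1 * τ 0 0 - σ 0 1 * τ 1 0 - σ 1 0 * τ 0 1
      = σ.trace * τ.trace - (σ * τ).trace := by
    simp [Matrix.trace, Matrix.mul_apply, Fin.sum_univ_two]
    ring
  have hpos := aux_trace_mul_psd_nonneg hσ.1 hτ.1
  rw [Complex.le_def] at hpos
  rw [hid, hσ.2, hτ.2]
  simp only [one_mul, Complex.sub_re, Complex.one_re]
  simpa using hpos.1

lemma aux_forward (w : ℝ) (h : IsSeparableState (wernerState w)) : w ≤ 1/3 := by
  obtain ⟨k, p, σ, τ, hp, hsum, hσ, hτ, heq⟩ := h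
  have key : ∀ a b c d : Fin 2, wernerState w (a,b) (c,d)
      = ∑ i, (p i : ℂ) * (σ i a c * τ i b d) := by
    intro a b c d
    have := congrFun (congrFun heq (a,b)) (c,d)
    simpa [Matrix.sum_apply, Matrix.kroneckerMap_apply] using this
  have hC : (((1 + 3*w)/2 : ℝ) : ℂ)
      = ∑ i, (p i : ℂ) * (σ i 0 0 * τ i 1 1 + σ i 1 1 * τ i 0 0
          - σ i 0 1 * τ i 1 0 - σ i 1 0 * τ i 0 1) := by
    have e1 := key 0 1 0 1
    have e2 := key 1 0 1 0
    have e3 := key 0 1 1 0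
    have e4 := key 1 0 0 1
    have hl : (((1 + 3*w)/2 : ℝ) : ℂ)
        = wernerState w (0,1) (0,1) + wernerState w (1,0) (1,0)
          - wernerState w (0,1) (1,0) - wernerState w (1,0) (0,1) := by
      simp [wernerState, pairToFin4]
      ring
    rw [hl, e1, e2, e3, e4, ← Finset.sum_add_distrib, ← Finset.sum_sub_distrib,
      ← Finset.sum_sub_distrib]
    exact Finset.sum_congr rfl fun i _ => by ring
  have hre := congrArg Complex.re hC
  simp only [Complex.ofReal_re, Complex.re_sum, Complex.re_ofReal_mul] at hre
  have hle : (1 + 3*w)/2 ≤ 1 := by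
    rw [hre]
    calc ∑ i, p i * (σ i 0 0 * τ i 1 1 + σ i 1 1 * τ i 0 0
          - σ i 0 1 * τ i 1 0 - σ i 1 0 * τ i 0 1).re
        ≤ ∑ i, p i * 1 :=
          Finset.sum_le_sum fun i _ =>
            mul_le_mul_of_nonneg_left (aux_key_ineq (hσ i) (hτ i)) (hp i)
      _ = 1 := by simpa using hsum
  linarith

noncomputable def projP (r : ℝ) (v : Fin 2 → ℂ) : Matrix (Fin 2) (Fin 2) ℂ :=
  Matrix.of fun i j => (r : ℂ) * (v i * star (v j))

lemma projP_psd (r : ℝ) (hr : 0 ≤ r) (v : Fin 2 → ℂ) : (projP r v).PosSemidef := by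
  refine Matrix.PosSemidef.of_dotProduct_mulVec_nonneg ?_ ?_
  · ext i j
    simp [projP, Matrix.conjTranspose_apply, mul_comm]
  · intro x
    have h : star x ⬝ᵥ ((projP r v) *ᵥ x)
        = (r : ℂ) * (star (star (v 0) * x 0 + star (v 1) * x 1) *
          (star (v 0) * x 0 + star (v 1) * x 1)) := by
      simp [projP, dotProduct, Matrix.mulVec, Fin.sum_univ_two]
      ring
    rw [h]
    exact mul_nonneg (by exact_mod_cast Complex.zero_le_real.mpr hr)
      (star_mul_self_nonneg _)

lemma projP_density (r : ℝ) (hr : 0 ≤ r) (v : Fin 2 → ℂ)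
    (h : (r : ℂ) * (v 0 * star (v 0) + v 1 * star (v 1)) = 1) :
    IsDensityMatrix (projP r v) := by
  refine ⟨projP_psd r hr v, ?_⟩
  rw [← h]
  simp [projP, Matrix.trace, Fin.sum_univ_two]
  ring

noncomputable def Pz0 := projP 1 ![1, 0]
noncomputable def Pz1 := projP 1 ![0, 1]
noncomputable def Pxp := projP (1/2) ![1, 1]
noncomputable def Pxm := projP (1/2) ![1, -1]
noncomputable def Pyp := projP (1/2) ![1, Complex.I]
noncomputable def Pym := projP (1/2) ![1, -Complex.I]

set_option maxHeartbeats 4000000 in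
lemma aux_backward (w : ℝ) (hw1 : -(1/3) ≤ w) (hw2 : w ≤ 1/3) :
    IsSeparableState (wernerState w) := by
  refine ⟨12, ![(1+3*w)/12, (1+3*w)/12, (1+3*w)/12, (1+3*w)/12, (1+3*w)/12, (1+3*w)/12,
      (1-3*w)/12, (1-3*w)/12, (1-3*w)/12, (1-3*w)/12, (1-3*w)/12, (1-3*w)/12],
    ![Pz0, Pz1, Pxp, Pxm, Pyp, Pym, Pz0, Pz1, Pxp, Pxm, Pyp, Pym],
    ![Pz1, Pz0, Pxm, Pxp, Pym, Pyp, Pz0, Pz1, Pxp, Pxm, Pyp, Pym],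
    ?_, ?_, ?_, ?_, ?_⟩
  · intro i
    fin_cases i <;>
      first
      | · show (0:ℝ) ≤ (1+3*w)/12
          linarith
      | · show (0:ℝ) ≤ (1-3*w)/12
          linarith
  · simp [Fin.sum_univ_succ]
    ring
  · intro i
    fin_cases i <;>
      exact projP_density _ (by norm_num) _ (by norm_num [Complex.ext_iff])
  · intro i
    fin_cases i <;>
      exact projP_density _ (by norm_num) _ (by norm_num [Complex.ext_iff])
  · funext pq rs
    obtain ⟨a, b⟩ := pq
    obtain ⟨c, d⟩ := rs
    fin_cases a <;> fin_cases b <;> fin_cases c <;> fin_cases d <;>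
    · simp only [Matrix.sum_apply, Fin.sum_univ_succ, Finset.sum_empty,
        Matrix.cons_val_zero, Matrix.cons_val_one, Matrix.head_cons, Matrix.cons_val_succ,
        Matrix.smul_apply, Matrix.kroneckerMap_apply, smul_eq_mul,
        Pz0, Pz1, Pxp, Pxm, Pyp, Pym, projP, Matrix.of_apply]
      simp only [wernerState, pairToFin4]
      norm_num [Complex.ext_iff]
      try ring

end WernerAux

theorem werner_separable_iff (w : ℝ) (hw : w ∈ Set.Icc (-(1 / 3) : ℝ) 1) :
    IsSeparableState (wernerState w) ↔ w ≤ 1 / 3 := by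
  constructor
  · exact aux_forward w
  · exact fun h => aux_backward w hw.1 h
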